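/- For every integer N ≥ 2, the cardinality D(N) of the set S(N) = {(d, i) : d, i integers, d ≥ 1, i ≥ 2, N(i − 1) = d(d + i)} satisfies D(N) ≤ (σ₀(N) − 1)(σ₀(N+1) − 1), where σ₀(n) denotes the number of positive divisors of n. -/

import Mathlib

/-- For every integer `N ≥ 2`, the cardinality `D(N)` of
`S(N) = {(d,i) : d ≥ 1, i ≥ 2, N(i−1) = d(d+i)}` satisfies
`D(N) ≤ (σ₀(N) − 1)(σ₀(N+1) − 1)`, where `σ₀(n)` is the number of positive
divisors of `n`. -/
theorem solution_set_card_upper_bound (N : ℕ) (hN : 2 ≤ N) :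
    ({p : ℤ × ℤ | 1 ≤ p.1 ∧ 2 ≤ p.2 ∧ (N : ℤ) * (p.2 - 1) = p.1 * (p.1 + p.2)}).Finite ∧
    ({p : ℤ × ℤ | 1 ≤ p.1 ∧ 2 ≤ p.2 ∧ (N : ℤ) * (p.2 - 1) = p.1 * (p.1 + p.2)}).ncard ≤
      (N.divisors.card - 1) * ((N + 1).divisors.card - 1) := by
  set S := {p : ℤ × ℤ | 1 ≤ p.1 ∧ 2 ≤ p.2 ∧ (N : ℤ) * (p.2 - 1) = p.1 * (p.1 + p.2)} with hS
  -- key facts about elements of S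
  have key : ∀ p ∈ S, 0 < (N : ℤ) - p.1 ∧ ((N : ℤ) - p.1) ∣ (N : ℤ) * (N + 1) := by
    rintro ⟨d, i⟩ ⟨hd, hi, heq⟩
    simp only at hd hi heq ⊢
    constructor
    · nlinarith [sq_nonneg d]
    · exact ⟨i + N + d, by linear_combination -heq⟩
  set f : ℤ × ℤ → ℕ × ℕ := fun p =>
    (Nat.gcd (((N : ℤ) - p.1).toNat) N, Nat.gcd (((N : ℤ) - p.1).toNat) (N + 1)) with hf
  have hNpos : (0:ℕ) < N := by omega
  have hcop : Nat.Coprime N (N + 1) := by simp [Nat.Coprime]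
  -- for p in S, toNat (N - p.1) divides N*(N+1) and recovers from f
  have hrec : ∀ p ∈ S, Nat.gcd (((N : ℤ) - p.1).toNat) N *
      Nat.gcd (((N : ℤ) - p.1).toNat) (N + 1) = ((N : ℤ) - p.1).toNat := by
    intro p hp
    obtain ⟨hpos, hdvd⟩ := key p hp
    rw [Nat.gcd_mul_gcd_eq_iff_dvd_mul_of_coprime hcop]
    have : ((((N : ℤ) - p.1).toNat : ℤ)) ∣ ((N * (N+1) : ℕ) : ℤ) := by
      rw [Int.toNat_of_nonneg hpos.le]; push_cast; exact hdvd
    exact_mod_cast this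
  have hinj : Set.InjOn f S := by
    rintro ⟨d, i⟩ hp ⟨d', i'⟩ hq hfeq
    have h1 := hrec _ hp
    have h2 := hrec _ hq
    simp only [hf, Prod.mk.injEq] at hfeq
    have ha : (((N : ℤ) - d).toNat) = (((N : ℤ) - d').toNat) := by
      rw [← h1, ← h2, hfeq.1, hfeq.2]
    have hd : d = d' := by
      have := key _ hp; have := key _ hq
      have e1 : ((((N : ℤ) - d).toNat : ℤ)) = (N : ℤ) - d := Int.toNat_of_nonneg (key _ hp).1.le
      have e2 : ((((N : ℤ) - d').toNat : ℤ)) = (N : ℤ) - d' := Int.toNat_of_nonneg (key _ hq).1.le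
      have : ((N : ℤ) - d) = (N : ℤ) - d' := by rw [← e1, ← e2, ha]
      linarith
    subst hd
    have heq := hp.2.2
    have heq' := hq.2.2
    simp only at heq heq'
    have hne : (N : ℤ) - d ≠ 0 := (key _ hp).1.ne'
    have : i * ((N : ℤ) - d) = i' * ((N : ℤ) - d) := by linear_combination heq - heq'
    have : i = i' := mul_right_cancel₀ hne this
    simp [this]
  -- image lands in the product finset
  set T : Finset (ℕ × ℕ) := (N.divisors.erase N) ×ˢ ((N + 1).divisors.erase (N + 1)) with hT
  have hmaps : ∀ p ∈ S, f p ∈ T := by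
    intro p hp
    obtain ⟨hpos, hdvd⟩ := key p hp
    have hd1 : 1 ≤ p.1 := hp.1
    have hapos : 0 < ((N : ℤ) - p.1).toNat := by
      rw [Int.lt_toNat]; exact_mod_cast hpos
    have halt : ((N : ℤ) - p.1).toNat < N := by
      have : (N : ℤ) - p.1 < N := by linarith
      omega
    have h1 : Nat.gcd (((N : ℤ) - p.1).toNat) N ≤ (((N : ℤ) - p.1).toNat) :=
      Nat.le_of_dvd hapos (Nat.gcd_dvd_left _ _)
    have h2 : Nat.gcd (((N : ℤ) - p.1).toNat) (N+1) ≤ (((N : ℤ) - p.1).toNat) :=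
      Nat.le_of_dvd hapos (Nat.gcd_dvd_left _ _)
    simp only [hT, hf, Finset.mem_product, Finset.mem_erase, Nat.mem_divisors]
    refine ⟨⟨by omega, Nat.gcd_dvd_right _ _, by omega⟩,
           ⟨by omega, Nat.gcd_dvd_right _ _, by omega⟩⟩
  have himg : f '' S ⊆ ↑T := by rintro _ ⟨p, hp, rfl⟩; exact hmaps p hp
  have hfin : S.Finite := Set.Finite.of_finite_image ((T.finite_toSet).subset himg) hinj
  refine ⟨hfin, ?_⟩
  calc S.ncard = (f '' S).ncard := (Set.ncard_image_of_injOn hinj).symm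
    _ ≤ (↑T : Set (ℕ × ℕ)).ncard := Set.ncard_le_ncard himg T.finite_toSet
    _ = T.card := Set.ncard_coe_finset T
    _ = (N.divisors.erase N).card * ((N+1).divisors.erase (N+1)).card := Finset.card_product _ _
    _ = (N.divisors.card - 1) * ((N + 1).divisors.card - 1) := by
        rw [Finset.card_erase_of_mem (Nat.mem_divisors_self N (by omega)),
           Finset.card_erase_of_mem (Nat.mem_divisors_self (N+1) (by omega))]
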